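/- Let 𝒜 be an additive category and a : A → A₀ an arrow. Then the reflexive graph with object of objects A₀, object of arrows A₀ ⊕ A, domain map the projection π₁ : A₀ ⊕ A → A₀, codomain map [id; a] : A₀ ⊕ A → A₀ (acting as identity on A₀ and as a on A), and reflexivity i₁ : A₀ → A₀ ⊕ A, admits a unique internal category composition, and this composition is id ⊕ ∇ : A₀ ⊕ A ⊕ A → A₀ ⊕ A where ∇ is the codiagonal of A. -/
import Mathlib


open CategoryTheory Limits

universe v u v' u'

/-- A structure of nullhomotopies on a category, with nullhomotopies on `g : X ⟶ Y`
given as a subset of an ambient type `E X Y`. -/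
structure NullStruct (B : Type u) [Category.{v} B] where
  E : B → B → Type v
  theta : ∀ {X Y : B}, (X ⟶ Y) → Set (E X Y)
  comp : ∀ {A X Y D : B}, (A ⟶ X) → (Y ⟶ D) → E X Y → E A D
  comp_mem : ∀ {A X Y D : B} (f : A ⟶ X) {g : X ⟶ Y} (h : Y ⟶ D) {φ : E X Y},
    φ ∈ theta g → comp f h φ ∈ theta (f ≫ g ≫ h)
  comp_comp : ∀ {A' A X Y D D' : B} (f' : A' ⟶ A) (f : A ⟶ X) {g : X ⟶ Y}
    (h : Y ⟶ D) (h' : D ⟶ D') {φ : E X Y}, φ ∈ theta g →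
    comp (f' ≫ f) (h ≫ h') φ = comp f' h' (comp f h φ)
  id_comp : ∀ {X Y : B} {g : X ⟶ Y} {φ : E X Y}, φ ∈ theta g →
    comp (𝟙 X) (𝟙 Y) φ = φ

/-- The nullhomotopy structure `Θ_∅` on a category with an initial object. -/
noncomputable def thetaEmpty (A : Type u) [Category.{v} A] [HasInitial A] : NullStruct A where
  E X _ := X ⟶ ⊥_ A
  theta {X Y} g := {φ | φ ≫ initial.to Y = g}
  comp f _ φ := f ≫ φ
  comp_mem := by
    intro W X Y D f g h φ hφ
    simp only [Set.mem_setOf_eq] at hφ ⊢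
    rw [Category.assoc, ← hφ]
    congr 1
    rw [Category.assoc]
    congr 1
    apply Subsingleton.elim
  comp_comp := by intros; simp
  id_comp := by intros; simp

/-- The diagonal nullhomotopy structure `Θ_Δ` on the arrow category. -/
def thetaDelta (A : Type u) [Category.{v} A] : NullStruct (Arrow A) where
  E X Y := X.right ⟶ Y.left
  theta {X Y} g := {φ | X.hom ≫ φ = g.left ∧ φ ≫ Y.hom = g.right}
  comp f h φ := f.right ≫ φ ≫ h.left
  comp_mem := by
    intro W X Y D f g h φ hφ
    obtain ⟨h1, h2⟩ := hφ
    constructor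
    · show W.hom ≫ f.right ≫ φ ≫ h.left = (f ≫ g ≫ h).left
      rw [← Arrow.w_assoc f, reassoc_of% h1]
      rfl
    · show (f.right ≫ φ ≫ h.left) ≫ _ = (f ≫ g ≫ h).right
      simp only [Category.assoc]
      rw [Arrow.w h, reassoc_of% h2]
      rfl
  comp_comp := by intros; simp
  id_comp := by intros; simp

/-- Reduced interchange. -/
def ReducedInterchange {B : Type u} [Category.{v} B] (N : NullStruct B) : Prop :=
  ∀ {X Y Z : B} (f : X ⟶ Y) (g : Y ⟶ Z) (α : N.E X Y) (β : N.E Y Z),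
    α ∈ N.theta f → β ∈ N.theta g → N.comp (𝟙 X) g α = N.comp f (𝟙 Z) β

/-- A `Θ`-cokernel. -/
structure IsThetaCokernel {B : Type u} [Category.{v} B] (N : NullStruct B)
    {X Y Q : B} (g : X ⟶ Y) (c : Y ⟶ Q) (γ : N.E X Q) : Prop where
  mem : γ ∈ N.theta (g ≫ c)
  factor : ∀ {D : B} (h : Y ⟶ D) (φ : N.E X D), φ ∈ N.theta (g ≫ h) →
    ∃! h' : Q ⟶ D, c ≫ h' = h ∧ N.comp (𝟙 X) h' γ = φ

/-- A strong `Θ`-cokernel. -/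
structure IsStrongThetaCokernel {B : Type u} [Category.{v} B] (N : NullStruct B)
    {X Y Q : B} (g : X ⟶ Y) (c : Y ⟶ Q) (γ : N.E X Q)
    extends IsThetaCokernel N g c γ : Prop where
  strong : ∀ {D : B} (h : Q ⟶ D) (φ : N.E Y D), φ ∈ N.theta (c ≫ h) →
    N.comp g (𝟙 D) φ = N.comp (𝟙 X) h γ →
    ∃! φ' : N.E Q D, φ' ∈ N.theta h ∧ N.comp c (𝟙 D) φ' = φ

/-- A pushout square which is strong with respect to nullhomotopies. -/
def PushoutThetaStrong {B : Type u} [Category.{v} B] (N : NullStruct B)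
    {Z X Y P : B} (f : Z ⟶ X) (g : Z ⟶ Y) (h : X ⟶ P) (i : Y ⟶ P) : Prop :=
  ∀ {D : B} (x : X ⟶ D) (y : Y ⟶ D) (z : P ⟶ D), h ≫ z = x → i ≫ z = y →
    ∀ (φ : N.E X D) (ψ : N.E Y D), φ ∈ N.theta x → ψ ∈ N.theta y →
      N.comp f (𝟙 D) φ = N.comp g (𝟙 D) ψ →
      ∃! χ : N.E P D, χ ∈ N.theta z ∧ N.comp h (𝟙 D) χ = φ ∧ N.comp i (𝟙 D) χ = ψ

/-- A `Θ`-strong initial object. -/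
def InitialThetaStrong {B : Type u} [Category.{v} B] (N : NullStruct B) [HasInitial B] : Prop :=
  ∀ X : B, ∃! γ : N.E (⊥_ B) X, γ ∈ N.theta (initial.to X)

/-- The embedding `Γ : 𝒜 → Arr(𝒜)` sending `X` to `∅ → X`. -/
@[simps]
noncomputable def Gam (A : Type u) [Category.{v} A] [HasInitial A] : A ⥤ Arrow A where
  obj X := Arrow.mk (initial.to X)
  map {X Y} g := Arrow.homMk (u := 𝟙 (⊥_ A)) (v := g) (by apply Limits.initial.hom_ext)
  map_id X := by apply CommaMorphism.ext <;> simp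
  map_comp f g := by apply CommaMorphism.ext <;> simp

/-- in an additive category, the reflexive graph
`(A₀ ⊕ A, π₁, [id; a], i₁)` admits a unique internal category composition, and it
is `id ⊕ ∇`. A map `m` on the object of composable pairs `A₀ ⊕ A ⊕ A` is an
internal composition iff it is compatible with domain and codomain and unital,
iff `m = id ⊕ ∇`. -/
theorem stmt17 (C : Type u) [Category.{v} C] [Preadditive C] [HasBinaryBiproducts C]
    {A A₀ : C} (a : A ⟶ A₀) :
    ∀ m : (A₀ ⊞ A) ⊞ A ⟶ A₀ ⊞ A,
      (m ≫ biprod.fst = biprod.fst ≫ (biprod.fst : A₀ ⊞ A ⟶ A₀) ∧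
        m ≫ biprod.desc (𝟙 A₀) a =
          (biprod.lift (biprod.fst ≫ biprod.desc (𝟙 A₀) a) biprod.snd :
            (A₀ ⊞ A) ⊞ A ⟶ A₀ ⊞ A) ≫ biprod.desc (𝟙 A₀) a ∧
        (biprod.inl : A₀ ⊞ A ⟶ (A₀ ⊞ A) ⊞ A) ≫ m = 𝟙 (A₀ ⊞ A) ∧
        biprod.lift (biprod.fst ≫ (biprod.inl : A₀ ⟶ A₀ ⊞ A)) biprod.snd ≫ m = 𝟙 (A₀ ⊞ A))
      ↔ m = biprod.lift (biprod.fst ≫ biprod.fst)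
          (biprod.fst ≫ biprod.snd + biprod.snd) := by
  intro m
  constructor
  · rintro ⟨-, -, h3, h4⟩
    have h4' : (biprod.inr : A ⟶ (A₀ ⊞ A) ⊞ A) ≫ m = biprod.inr := by
      have key : (biprod.inr : A ⟶ A₀ ⊞ A) ≫
          biprod.lift (biprod.fst ≫ (biprod.inl : A₀ ⟶ A₀ ⊞ A)) biprod.snd
          = (biprod.inr : A ⟶ (A₀ ⊞ A) ⊞ A) := by ext <;> simp
      calc (biprod.inr : A ⟶ (A₀ ⊞ A) ⊞ A) ≫ m
          = (biprod.inr ≫ biprod.lift (biprod.fst ≫ (biprod.inl : A₀ ⟶ A₀ ⊞ A)) biprod.snd) ≫ m := by rw [key]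
        _ = biprod.inr := by rw [Category.assoc, h4, Category.comp_id]
    apply biprod.hom_ext' <;> ext <;>
      simp [h3, reassoc_of% h3, h4', reassoc_of% h4']
  · rintro rfl
    refine ⟨by ext <;> simp, by ext <;> simp, by ext <;> simp, by ext <;> simp⟩
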